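/- For every integer n ≥ 1, every natural number m, and every real x ∈ [2m, 2m+2], f_n(x) has the same sign as u_m, i.e., u_m · f_n(x) ≥ 0. -/
import Mathlib


/-- The ±1 Thue–Morse sequence: `u n = (-1)^(s₂(n)+1)` where `s₂` is the binary digit sum. -/
def u (n : ℕ) : ℤ := (-1) ^ ((Nat.digits 2 n).sum + 1)

/-- The "Pascal triangle" associated to the Thue–Morse sequence:
`Sig k n` is `Σ^k_n` (k the superscript, n the subscript). -/
def Sig : ℕ → ℕ → ℤ
  | k, 0 => u k
  | 0, _ + 1 => 0
  | k + 1, n + 1 => Sig k n + Sig k (n + 1)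

lemma u_zero : u 0 = -1 := by simp [u]

lemma u_even (m : ℕ) : u (2 * m) = u m := by
  rcases Nat.eq_zero_or_pos m with rfl | hm
  · rfl
  · unfold u
    rw [Nat.digits_def' (by norm_num : 1 < 2) (by omega)]
    simp [Nat.mul_div_cancel_left, Nat.mul_mod_right]

lemma u_odd (m : ℕ) : u (2 * m + 1) = - u m := by
  unfold u
  rw [Nat.digits_def' (by norm_num : 1 < 2) (by omega)]
  have h1 : (2 * m + 1) % 2 = 1 := by omega
  have h2 : (2 * m + 1) / 2 = m := by omega
  rw [h1, h2]
  simp [List.sum_cons, pow_add, pow_succ]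

lemma u_one : u 1 = 1 := by
  have := u_odd 0
  rw [u_zero] at this
  simpa using this

lemma u_mul_self (m : ℕ) : u m * u m = 1 := by
  unfold u
  rw [← pow_add]
  exact Even.neg_one_pow ⟨_, rfl⟩

lemma Sig_zero_right (k : ℕ) : Sig k 0 = u k := by cases k <;> rfl
lemma Sig_zero_left (n : ℕ) (hn : 1 ≤ n) : Sig 0 n = 0 := by
  obtain ⟨n, rfl⟩ : ∃ m, n = m + 1 := ⟨n - 1, by omega⟩
  rfl
lemma Sig_succ (k n : ℕ) : Sig (k + 1) (n + 1) = Sig k n + Sig k (n + 1) := rfl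

lemma sig1 (m : ℕ) : Sig (2 * m) 1 = 0 ∧ Sig (2 * m + 1) 1 = u m := by
  induction m with
  | zero =>
    refine ⟨rfl, ?_⟩
    show Sig 0 0 + Sig 0 1 = u 0
    simp [Sig_zero_right, Sig_zero_left]
  | succ m ih =>
    have h2 : Sig (2 * m + 2) 1 = 0 := by
      have : Sig (2 * m + 2) 1 = Sig (2 * m + 1) 0 + Sig (2 * m + 1) 1 := Sig_succ _ _
      rw [this, Sig_zero_right, u_odd, ih.2]; ring
    have e : 2 * (m + 1) = 2 * m + 2 := by ring
    refine ⟨by rw [e]; exact h2, ?_⟩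
    have : Sig (2 * (m + 1) + 1) 1 = Sig (2 * m + 2) 0 + Sig (2 * m + 2) 1 := by
      rw [e]; exact Sig_succ _ _
    rw [this, h2, Sig_zero_right, show 2 * m + 2 = 2 * (m + 1) by ring, u_even]
    ring

lemma sig11 : Sig 1 1 = -1 := by
  have := (sig1 0).2; simpa [u_zero] using this

lemma sig21 : Sig 2 1 = 0 := by
  have := (sig1 1).1; simpa using this

/-- Key identity: `Σ^{m·2^n+j}_n = -u_m · Σ^j_n` for `j ≤ 2^n`, `n ≥ 1`. -/
lemma keyA : ∀ n, 1 ≤ n → ∀ m, ∀ j ≤ 2 ^ n, Sig (m * 2 ^ n + j) n = - u m * Sig j n := by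
  intro n
  induction n with
  | zero => omega
  | succ n ih =>
    intro _ m j hj
    rcases Nat.eq_zero_or_pos n with rfl | hn
    · -- base case n+1 = 1
      interval_cases j
      · rw [Sig_zero_left 1 le_rfl, show m * 2 ^ 1 + 0 = 2 * m by ring, (sig1 m).1]; ring
      · rw [sig11, show m * 2 ^ 1 + 1 = 2 * m + 1 by ring, (sig1 m).2]; ring
      · rw [sig21, show m * 2 ^ 1 + 2 = 2 * (m + 1) by ring, (sig1 (m+1)).1]; ring
    · have IH := ih hn
      -- doubling at level n
      have dbl : ∀ m, ∀ j ≤ 2 ^ (n + 1), Sig (m * 2 ^ (n + 1) + j) n = - u m * Sig j n := by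
        intro m j hj
        rcases le_or_gt j (2 ^ n) with h | h
        · have e : m * 2 ^ (n + 1) + j = (2 * m) * 2 ^ n + j := by ring
          rw [e, IH (2 * m) j h, u_even]
        · obtain ⟨j', rfl⟩ : ∃ j', j = 2 ^ n + j' := ⟨j - 2 ^ n, by omega⟩
          have hj' : j' ≤ 2 ^ n := by
            have : 2 ^ (n + 1) = 2 ^ n + 2 ^ n := by ring
            omega
          have e : m * 2 ^ (n + 1) + (2 ^ n + j') = (2 * m + 1) * 2 ^ n + j' := by ring
          have e2 : 2 ^ n + j' = 1 * 2 ^ n + j' := by ring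
          rw [e, IH (2 * m + 1) j' hj', u_odd, e2, IH 1 j' hj', u_one]
          ring
      -- E: Sig (2^n + j) (n+1) = Sig (2^n) (n+1) - Sig j (n+1) for j ≤ 2^n
      have E : ∀ j ≤ 2 ^ n, Sig (2 ^ n + j) (n + 1) = Sig (2 ^ n) (n + 1) - Sig j (n + 1) := by
        intro j hj
        induction j with
        | zero => rw [Sig_zero_left (n + 1) (by omega)]; ring
        | succ j ihj =>
          have hj2 : j ≤ 2 ^ n := by omega
          have s1 : Sig (2 ^ n + (j + 1)) (n + 1)
              = Sig (2 ^ n + j) n + Sig (2 ^ n + j) (n + 1) := Sig_succ _ _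
          have s2 : Sig (2 ^ n + j) n = - Sig j n := by
            have e2 : 2 ^ n + j = 1 * 2 ^ n + j := by ring
            rw [e2, IH 1 j hj2, u_one]; ring
          rw [s1, s2, ihj hj2, Sig_succ j n]
          ring
      -- Sig (2^(n+1)) (n+1) = 0
      have Z1 : Sig (2 ^ (n + 1)) (n + 1) = 0 := by
        have := E (2 ^ n) le_rfl
        have e : 2 ^ n + 2 ^ n = 2 ^ (n + 1) := by ring
        rw [e] at this; omega
      have step : ∀ m, Sig (m * 2 ^ (n + 1)) (n + 1) = 0 →
          ∀ j ≤ 2 ^ (n + 1), Sig (m * 2 ^ (n + 1) + j) (n + 1) = - u m * Sig j (n + 1) := by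
        intro m hz j hjl
        induction j with
        | zero => rw [Sig_zero_left (n + 1) (by omega)]; simpa using hz
        | succ j ihj =>
          have hj2 : j ≤ 2 ^ (n + 1) := by omega
          have s1 : Sig (m * 2 ^ (n + 1) + (j + 1)) (n + 1)
              = Sig (m * 2 ^ (n + 1) + j) n + Sig (m * 2 ^ (n + 1) + j) (n + 1) := Sig_succ _ _
          rw [s1, dbl m j hj2, ihj hj2, Sig_succ j n]
          ring
      have zero : ∀ m, Sig (m * 2 ^ (n + 1)) (n + 1) = 0 := by
        intro m
        induction m with
        | zero => simpa using Sig_zero_left (n + 1) (by omega)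
        | succ m ihm =>
          have e : (m + 1) * 2 ^ (n + 1) = m * 2 ^ (n + 1) + 2 ^ (n + 1) := by ring
          rw [e, step m ihm (2 ^ (n + 1)) le_rfl, Z1]
          ring
      exact step m (zero m) j hj

lemma sigE (n : ℕ) (hn : 1 ≤ n) :
    ∀ j ≤ 2 ^ n, Sig (2 ^ n + j) (n + 1) = Sig (2 ^ n) (n + 1) - Sig j (n + 1) := by
  intro j hj
  induction j with
  | zero => rw [Sig_zero_left (n + 1) (by omega)]; ring
  | succ j ihj =>
    have hj2 : j ≤ 2 ^ n := by omega
    have s1 : Sig (2 ^ n + (j + 1)) (n + 1)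
        = Sig (2 ^ n + j) n + Sig (2 ^ n + j) (n + 1) := Sig_succ _ _
    have s2 : Sig (2 ^ n + j) n = - Sig j n := by
      have e2 : 2 ^ n + j = 1 * 2 ^ n + j := by ring
      rw [e2, keyA n hn 1 j hj2, u_one]; ring
    rw [s1, s2, ihj hj2, Sig_succ j n]; ring

lemma sig_nonpos : ∀ n, 1 ≤ n → ∀ j ≤ 2 ^ n, Sig j n ≤ 0 := by
  intro n
  induction n with
  | zero => omega
  | succ n ih =>
    intro _ j hj
    rcases Nat.eq_zero_or_pos n with rfl | hn
    · interval_cases j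
      · rw [Sig_zero_left 1 le_rfl]
      · rw [sig11]; norm_num
      · rw [sig21]
    · have IH := ih hn
      have h1 : ∀ j ≤ 2 ^ n, Sig j (n + 1) ≤ 0 := by
        intro j hj
        induction j with
        | zero => rw [Sig_zero_left (n + 1) (by omega)]
        | succ j ihj =>
          have hj2 : j ≤ 2 ^ n := by omega
          rw [Sig_succ j n]
          have := IH j hj2
          have := ihj hj2
          omega
      have h2 : ∀ d j, j + d ≤ 2 ^ n → Sig (j + d) (n + 1) ≤ Sig j (n + 1) := by
        intro d
        induction d with
        | zero => intro j _; simp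
        | succ d ihd =>
          intro j hjd
          have e : j + (d + 1) = (j + d) + 1 := by ring
          rw [e, Sig_succ (j + d) n]
          have t1 := IH (j + d) (by omega)
          have t2 := ihd j (by omega)
          omega
      rcases le_or_gt j (2 ^ n) with h | h
      · exact h1 j h
      · obtain ⟨j', rfl⟩ : ∃ j', j = 2 ^ n + j' := ⟨j - 2 ^ n, by omega⟩
        have hj' : j' ≤ 2 ^ n := by
          have : 2 ^ (n + 1) = 2 ^ n + 2 ^ n := by ring
          omega
        rw [sigE n hn j' hj']
        have := h2 (2 ^ n - j') j' (by omega)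
        rw [show j' + (2 ^ n - j') = 2 ^ n by omega] at this
        omega

lemma sig_sign (n : ℕ) (hn : 1 ≤ n) (m j : ℕ) (hj : j ≤ 2 ^ n) :
    0 ≤ u m * Sig (m * 2 ^ n + j) n := by
  rw [keyA n hn m j hj]
  have h1 : u m * (- u m * Sig j n) = - ((u m * u m) * Sig j n) := by ring
  rw [h1, u_mul_self m]
  have := sig_nonpos n hn j hj
  omega

lemma sig_mul_zero (n : ℕ) (hn : 1 ≤ n) (m : ℕ) : Sig (m * 2 ^ n) n = 0 := by
  have := keyA n hn m 0 (by positivity)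
  rw [Sig_zero_left n hn] at this
  simpa using this

/-- The renormalized points `x^k_n = 2^{-(n-1)(n-2)/2} Σ^k_n`. -/
noncomputable def xkn (n k : ℕ) : ℝ := (Sig k n : ℝ) / 2 ^ ((n - 1) * (n - 2) / 2)

/-- The piecewise linear interpolation `f n` of the points `x^k_n` at `k/2^{n-1}`,
vanishing on the nonpositive reals. -/
noncomputable def f (n : ℕ) (x : ℝ) : ℝ :=
  if x ≤ 0 then 0
  else
    xkn n ⌊(2 : ℝ) ^ (n - 1) * x⌋₊ +
      (2 : ℝ) ^ (n - 1) * (x - (⌊(2 : ℝ) ^ (n - 1) * x⌋₊ : ℝ) / 2 ^ (n - 1)) *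
        (xkn n (⌊(2 : ℝ) ^ (n - 1) * x⌋₊ + 1) - xkn n ⌊(2 : ℝ) ^ (n - 1) * x⌋₊)

lemma xkn_sign (N m j : ℕ) (hj : j ≤ 2 ^ (N + 1)) :
    0 ≤ (u m : ℝ) * xkn (N + 1) (m * 2 ^ (N + 1) + j) := by
  have h := sig_sign (N + 1) (by omega) m j hj
  unfold xkn
  rw [mul_div_assoc']
  apply div_nonneg _ (by positivity)
  exact_mod_cast h

theorem f_sign (n : ℕ) (hn : 1 ≤ n) (m : ℕ) (x : ℝ)
    (hx : x ∈ Set.Icc (2 * (m : ℝ)) (2 * (m : ℝ) + 2)) :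
    0 ≤ (u m : ℝ) * f n x := by
  obtain ⟨hxl, hxu⟩ := hx
  obtain ⟨N, rfl⟩ : ∃ N, n = N + 1 := ⟨n - 1, by omega⟩
  rw [f]
  split_ifs with h0
  · simp
  push_neg at h0
  simp only [Nat.add_sub_cancel]
  have h2N : (0:ℝ) < 2 ^ N := by positivity
  set k := ⌊(2 : ℝ) ^ N * x⌋₊ with hkdef
  have hx0 : 0 ≤ (2:ℝ) ^ N * x := by positivity
  have hfl : (k : ℝ) ≤ (2:ℝ) ^ N * x := Nat.floor_le hx0
  have hfu : (2:ℝ) ^ N * x < (k : ℝ) + 1 := Nat.lt_floor_add_one _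
  have klb : m * 2 ^ (N + 1) ≤ k := by
    apply Nat.le_floor
    have e : ((m * 2 ^ (N + 1) : ℕ) : ℝ) = (2:ℝ) ^ N * (2 * m) := by push_cast; ring
    rw [e]
    exact mul_le_mul_of_nonneg_left hxl (le_of_lt h2N)
  have hub : (2:ℝ) ^ N * x ≤ (((m + 1) * 2 ^ (N + 1) : ℕ) : ℝ) := by
    have e : (((m + 1) * 2 ^ (N + 1) : ℕ) : ℝ) = (2:ℝ) ^ N * (2 * m + 2) := by push_cast; ring
    rw [e]
    exact mul_le_mul_of_nonneg_left hxu (le_of_lt h2N)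
  have kub : k ≤ (m + 1) * 2 ^ (N + 1) := by
    have := hfl.trans hub
    exact_mod_cast this
  rcases eq_or_lt_of_le kub with keq | klt
  · -- top endpoint: x = 2m+2, delta = 0, value of Sig is 0
    have hxk : (2:ℝ) ^ N * x = (k : ℝ) := by
      apply le_antisymm _ hfl
      rw [keq]; exact hub
    have hdelta : x - (k : ℝ) / 2 ^ N = 0 := by
      field_simp
      linarith [hxk]
    have hz : xkn (N + 1) k = 0 := by
      unfold xkn
      rw [keq, sig_mul_zero (N + 1) (by omega) (m + 1)]
      simp
    rw [hdelta, hz]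
    simp
  · -- interior: convex combination of two nonneg values
    have hexp : (m + 1) * 2 ^ (N + 1) = m * 2 ^ (N + 1) + 2 ^ (N + 1) := by ring
    obtain ⟨j, hkk⟩ : ∃ j, k = m * 2 ^ (N + 1) + j := ⟨k - m * 2 ^ (N + 1), by omega⟩
    have hjle : j ≤ 2 ^ (N + 1) := by omega
    have hj1le : j + 1 ≤ 2 ^ (N + 1) := by omega
    have sA : 0 ≤ (u m : ℝ) * xkn (N + 1) k := by
      rw [hkk]; exact xkn_sign N m j hjle
    have sB : 0 ≤ (u m : ℝ) * xkn (N + 1) (k + 1) := by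
      rw [hkk, show m * 2 ^ (N + 1) + j + 1 = m * 2 ^ (N + 1) + (j + 1) by ring]
      exact xkn_sign N m (j + 1) hj1le
    set t : ℝ := (2:ℝ) ^ N * x - (k : ℝ) with htdef
    have ht0 : 0 ≤ t := by linarith
    have ht1 : t ≤ 1 := by linarith
    have hrepr : (2:ℝ) ^ N * (x - (k : ℝ) / 2 ^ N) = t := by
      field_simp [htdef]
      ring
    rw [hrepr]
    have key : (u m : ℝ) * (xkn (N + 1) k + t * (xkn (N + 1) (k + 1) - xkn (N + 1) k))
        = (1 - t) * ((u m : ℝ) * xkn (N + 1) k) + t * ((u m : ℝ) * xkn (N + 1) (k + 1)) := by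
      ring
    rw [key]
    exact add_nonneg (mul_nonneg (by linarith) sA) (mul_nonneg ht0 sB)
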